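/- Let ϖ, L, c, R, f_l be positive real numbers and define g(f) = ϖ·(L·c²·R + L·c·f) / ( f·f_l + c·R·(f + f_l) ) for f ≥ 0. Then the second derivative of g at any f ≥ 0 equals Φ(f) = 2·ϖ·L·c³·R²·(f_l + c·R) / ( f·f_l + c·R·(f + f_l) )³, and Φ(f) ≥ 0 for all f ≥ 0. -/

import Mathlib

/-- Appendix B: the second derivative of a single device's contribution to
the objective of Problem P1-E, and its nonnegativity. -/
theorem second_derivative_P1E
    (ϖ L c R fl : ℝ) (hϖ : 0 < ϖ) (hL : 0 < L) (hc : 0 < c)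
    (hR : 0 < R) (hfl : 0 < fl) :
    ∀ f : ℝ, 0 ≤ f →
      deriv (deriv (fun x : ℝ => ϖ * (L * c ^ 2 * R + L * c * x) /
          (x * fl + c * R * (x + fl)))) f
        = 2 * ϖ * L * c ^ 3 * R ^ 2 * (fl + c * R) /
            (f * fl + c * R * (f + fl)) ^ 3 ∧
      0 ≤ 2 * ϖ * L * c ^ 3 * R ^ 2 * (fl + c * R) /
            (f * fl + c * R * (f + fl)) ^ 3 := by
  intro f hf
  set S : Set ℝ := {x : ℝ | 0 < x * fl + c * R * (x + fl)} with hSdef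
  have hDcont : Continuous fun x : ℝ => x * fl + c * R * (x + fl) := by continuity
  have hS : IsOpen S := isOpen_lt continuous_const hDcont
  have hfS : f ∈ S := by
    have h1 : 0 < c * R * fl := by positivity
    have h2 : 0 ≤ f * fl := by positivity
    have h3 : 0 ≤ c * R * f := by positivity
    simp only [hSdef, Set.mem_setOf_eq]
    nlinarith
  have hDpos : 0 < f * fl + c * R * (f + fl) := hfS
  -- derivative of the denominator at any point
  have hD : ∀ x : ℝ, HasDerivAt (fun x : ℝ => x * fl + c * R * (x + fl)) (fl + c * R) x := by
    intro x
    have := ((hasDerivAt_id x).mul_const fl).add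
      (((hasDerivAt_id x).add_const fl).const_mul (c * R))
    exact this.congr_deriv (by ring)
  -- first derivative on S
  have hderiv1 : ∀ x ∈ S,
      HasDerivAt (fun x : ℝ => ϖ * (L * c ^ 2 * R + L * c * x) /
          (x * fl + c * R * (x + fl)))
        (-(ϖ * L * c ^ 3 * R ^ 2) / (x * fl + c * R * (x + fl)) ^ 2) x := by
    intro x hx
    have hDx : x * fl + c * R * (x + fl) ≠ 0 := ne_of_gt hx
    have hN : HasDerivAt (fun x : ℝ => ϖ * (L * c ^ 2 * R + L * c * x)) (ϖ * (L * c)) x := by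
      have := (((hasDerivAt_id x).const_mul (L * c)).const_add (L * c ^ 2 * R)).const_mul ϖ
      exact this.congr_deriv (by ring)
    have := hN.div (hD x) hDx
    exact this.congr_deriv (by field_simp; ring)
  have hEq : deriv (fun x : ℝ => ϖ * (L * c ^ 2 * R + L * c * x) /
        (x * fl + c * R * (x + fl)))
      =ᶠ[nhds f] fun x : ℝ => -(ϖ * L * c ^ 3 * R ^ 2) / (x * fl + c * R * (x + fl)) ^ 2 := by
    filter_upwards [hS.mem_nhds hfS] with x hx using (hderiv1 x hx).deriv
  have hderiv2 : HasDerivAt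
      (fun x : ℝ => -(ϖ * L * c ^ 3 * R ^ 2) / (x * fl + c * R * (x + fl)) ^ 2)
      (2 * ϖ * L * c ^ 3 * R ^ 2 * (fl + c * R) / (f * fl + c * R * (f + fl)) ^ 3) f := by
    have hDf : f * fl + c * R * (f + fl) ≠ 0 := ne_of_gt hDpos
    have hDsq : HasDerivAt (fun x : ℝ => (x * fl + c * R * (x + fl)) ^ 2)
        (2 * (f * fl + c * R * (f + fl)) * (fl + c * R)) f := by
      have := ((hD f).pow 2)
      exact this.congr_deriv (by ring)
    have hDsq0 : (f * fl + c * R * (f + fl)) ^ 2 ≠ 0 := pow_ne_zero _ hDf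
    have := (hasDerivAt_const f (-(ϖ * L * c ^ 3 * R ^ 2))).div hDsq hDsq0
    exact this.congr_deriv (by field_simp; ring)
  constructor
  · calc deriv (deriv (fun x : ℝ => ϖ * (L * c ^ 2 * R + L * c * x) /
          (x * fl + c * R * (x + fl)))) f
        = deriv (fun x : ℝ => -(ϖ * L * c ^ 3 * R ^ 2) /
            (x * fl + c * R * (x + fl)) ^ 2) f := hEq.deriv_eq
      _ = _ := hderiv2.deriv
  · positivity
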